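/- Let m, d be positive integers, let G be an m-joined graph, and let W ⊆ V(G) satisfy |W| ≥ (3d+4)m. Then there is a set B ⊆ V(G) with |B| ≤ m such that every set U ⊆ V(G)\B with |U| ≤ 2m satisfies |N(U, W\B)| ≥ d·|U|. -/
import Mathlib


/-- A graph `G` is `m`-joined if there is an edge of `G` between any two disjoint
vertex sets each containing at least `m` vertices. -/
def MJoined {V : Type*} (G : SimpleGraph V) (m : ℕ) : Prop :=
  ∀ A B : Set V, Disjoint A B → m ≤ A.ncard → m ≤ B.ncard →
    ∃ a ∈ A, ∃ b ∈ B, G.Adj a b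

/-- The exterior neighbourhood `N(U)` of a vertex set `U`: all vertices outside `U`
having a neighbour in `U`. -/
def extNbhd {V : Type*} (G : SimpleGraph V) (U : Set V) : Set V :=
  {v | v ∉ U ∧ ∃ u ∈ U, G.Adj u v}

/-- Let `m, d` be positive integers, `G` an `m`-joined graph, and `W ⊆ V(G)` with
`|W| ≥ (3d+4)m`.  Then there is a set `B ⊆ V(G)` with `|B| ≤ m` such that every set
`U ⊆ V(G)\B` with `|U| ≤ 2m` satisfies `|N(U, W\B)| ≥ d·|U|`. -/
lemma joined_bound {V : Type*} [Fintype V] {G : SimpleGraph V} {m : ℕ} (hG : MJoined G m)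
    {W X : Set V} (hX : m ≤ X.ncard) :
    W.ncard ≤ X.ncard + (extNbhd G X ∩ W).ncard + (m - 1) := by
  have hsmall : (W \ (X ∪ extNbhd G X)).ncard ≤ m - 1 := by
    by_contra h
    push_neg at h
    have hm : m ≤ (W \ (X ∪ extNbhd G X)).ncard := by omega
    have hdisj : Disjoint X (W \ (X ∪ extNbhd G X)) := by
      rw [Set.disjoint_left]; intro a ha hb; exact hb.2 (Or.inl ha)
    obtain ⟨a, ha, b, hb, hab⟩ := hG X _ hdisj hX hm
    exact hb.2 (Or.inr ⟨fun hbX => hb.2 (Or.inl hbX), a, ha, hab⟩)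
  have hsub : W ⊆ X ∪ (extNbhd G X ∩ W) ∪ (W \ (X ∪ extNbhd G X)) := by
    intro v hv
    by_cases h1 : v ∈ X
    · exact Or.inl (Or.inl h1)
    by_cases h2 : v ∈ extNbhd G X
    · exact Or.inl (Or.inr ⟨h2, hv⟩)
    · exact Or.inr ⟨hv, by simp [h1, h2]⟩
  calc W.ncard ≤ (X ∪ (extNbhd G X ∩ W) ∪ (W \ (X ∪ extNbhd G X))).ncard :=
        Set.ncard_le_ncard hsub (Set.toFinite _)
    _ ≤ (X ∪ (extNbhd G X ∩ W)).ncard + (W \ (X ∪ extNbhd G X)).ncard := Set.ncard_union_le _ _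
    _ ≤ X.ncard + (extNbhd G X ∩ W).ncard + (m - 1) := by
        have := Set.ncard_union_le X (extNbhd G X ∩ W)
        omega

lemma greedy_step {V : Type*} [Fintype V] (m d : ℕ) (hm : 0 < m) (hd : 0 < d)
    (G : SimpleGraph V) (hG : MJoined G m)
    (W : Set V) (hW : (3 * d + 4) * m ≤ W.ncard) :
    ∀ k (B : Set V), B.ncard < m → (extNbhd G B ∩ W).ncard ≤ d * B.ncard →
      m - B.ncard ≤ k →
    ∃ B' : Set V, B'.ncard ≤ m ∧
      ∀ U : Set V, Disjoint U B' → U.ncard ≤ 2 * m →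
        d * U.ncard ≤ (extNbhd G U ∩ (W \ B')).ncard := by
  intro k
  induction k with
  | zero => intro B hBm _ hk; omega
  | succ k ih =>
    intro B hBm hQ hk
    by_cases hbad : ∃ U : Set V, Disjoint U B ∧ U.ncard ≤ 2 * m ∧
        (extNbhd G U ∩ (W \ B)).ncard < d * U.ncard
    · obtain ⟨U, hUB, hU2m, hUbad⟩ := hbad
      have hUpos : 0 < U.ncard := by
        by_contra h; push_neg at h
        interval_cases h' : U.ncard <;> omega
      set B' := B ∪ U with hB'
      have hcard : B'.ncard = B.ncard + U.ncard := by
        rw [hB', Set.ncard_union_eq hUB.symm (Set.toFinite _) (Set.toFinite _)]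
      -- invariant for B'
      have hsub : extNbhd G B' ∩ W ⊆ (extNbhd G B ∩ W) ∪ (extNbhd G U ∩ (W \ B)) := by
        rintro v ⟨⟨hvB', u, hu, hadj⟩, hvW⟩
        rcases hu with hu | hu
        · exact Or.inl ⟨⟨fun h => hvB' (Or.inl h), u, hu, hadj⟩, hvW⟩
        · exact Or.inr ⟨⟨fun h => hvB' (Or.inr h), u, hu, hadj⟩, hvW, fun h => hvB' (Or.inl h)⟩
      have hQ' : (extNbhd G B' ∩ W).ncard ≤ d * B'.ncard := by
        calc (extNbhd G B' ∩ W).ncard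
            ≤ ((extNbhd G B ∩ W) ∪ (extNbhd G U ∩ (W \ B))).ncard :=
              Set.ncard_le_ncard hsub (Set.toFinite _)
          _ ≤ (extNbhd G B ∩ W).ncard + (extNbhd G U ∩ (W \ B)).ncard := Set.ncard_union_le _ _
          _ ≤ d * B'.ncard := by rw [hcard, Nat.mul_add]; omega
      -- B' is still small
      have hB'm : B'.ncard < m := by
        by_contra h
        push_neg at h
        have h1 := joined_bound hG (W := W) h
        have h3 : B'.ncard ≤ 3 * m - 1 := by omega
        have : (3 * d + 4) * m ≤ B'.ncard + d * B'.ncard + (m - 1) := by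
          calc (3 * d + 4) * m ≤ W.ncard := hW
            _ ≤ B'.ncard + (extNbhd G B' ∩ W).ncard + (m - 1) := h1
            _ ≤ B'.ncard + d * B'.ncard + (m - 1) := by omega
        nlinarith [this, h3, Nat.sub_add_cancel hm, Nat.sub_add_cancel (by omega : 1 ≤ 3 * m)]
      exact ih B' hB'm hQ' (by omega)
    · push_neg at hbad
      exact ⟨B, le_of_lt hBm, fun U h1 h2 => hbad U h1 h2⟩

theorem statement_9 {V : Type*} [Fintype V] (m d : ℕ) (hm : 0 < m) (hd : 0 < d)
    (G : SimpleGraph V) (hG : MJoined G m)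
    (W : Set V) (hW : (3 * d + 4) * m ≤ W.ncard) :
    ∃ B : Set V, B.ncard ≤ m ∧
      ∀ U : Set V, Disjoint U B → U.ncard ≤ 2 * m →
        d * U.ncard ≤ (extNbhd G U ∩ (W \ B)).ncard := by
  exact greedy_step m d hm hd G hG W hW m ∅ (by simpa using hm) (by simp [extNbhd]) (by simp)
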